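/- arXiv:1509.04237 — 2 statements merged into one kernel-verified Lean document; each statement's English description precedes it below -/
import Mathlib

section
/- For a real number α with 1 < α < 2, the Grünwald–Letnikov weights ω_j^{(α)} = (-1)^j C(α,j) satisfy: (1) ω_0^{(α)} = 1 and ω_1^{(α)} = -α < 0; (2) 1 ≥ ω_2^{(α)} ≥ ω_3^{(α)} ≥ ⋯ ≥ 0, i.e. the sequence (ω_j^{(α)})_{j≥2} is nonincreasing, bounded above by 1, and nonnegative. -/
/-- The Grünwald–Letnikov weight `ω_j^{(α)} = (-1)^j C(α, j)` with the
generalized binomial coefficient `C(α, j) = α(α-1)⋯(α-j+1)/j!`. -/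
noncomputable def glWeight (α : ℝ) (j : ℕ) : ℝ :=
  (-1) ^ j * ((∏ i ∈ Finset.range j, (α - i)) / (Nat.factorial j))

lemma glWeight_succ (α : ℝ) (j : ℕ) :
    glWeight α (j + 1) = glWeight α j * (((j : ℝ) - α) / (j + 1)) := by
  unfold glWeight
  rw [Finset.prod_range_succ, Nat.factorial_succ, pow_succ]
  have h1 : ((j.factorial : ℝ)) ≠ 0 := by exact_mod_cast j.factorial_ne_zero
  have h2 : ((j : ℝ) + 1) ≠ 0 := by positivity
  push_cast
  field_simp
  ring

lemma glWeight_two (α : ℝ) : glWeight α 2 = α * (α - 1) / 2 := by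
  simp [glWeight, Finset.prod_range_succ]

/-- For `1 < α < 2`: `ω_0 = 1`, `ω_1 = -α < 0`, and the sequence
`(ω_j)_{j ≥ 2}` is bounded above by `1`, nonnegative, and nonincreasing. -/
theorem glWeight_properties (α : ℝ) (hα1 : 1 < α) (hα2 : α < 2) :
    glWeight α 0 = 1 ∧
    glWeight α 1 = -α ∧ glWeight α 1 < 0 ∧
    (∀ j : ℕ, 2 ≤ j → glWeight α j ≤ 1) ∧
    (∀ j : ℕ, 2 ≤ j → 0 ≤ glWeight α j) ∧
    (∀ j : ℕ, 2 ≤ j → glWeight α (j + 1) ≤ glWeight α j) := by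
  have h0 : glWeight α 0 = 1 := by simp [glWeight]
  have h1 : glWeight α 1 = -α := by simp [glWeight]
  have hnn : ∀ j : ℕ, 2 ≤ j → 0 ≤ glWeight α j := by
    intro j hj
    induction j with
    | zero => omega
    | succ n ih =>
      rcases Nat.lt_or_ge n 2 with hn | hn
      · interval_cases n
        · omega
        · rw [show (1:ℕ)+1 = 2 from rfl, glWeight_two]
          have := hα1.le
          nlinarith
      · rw [glWeight_succ]
        have hr : (0:ℝ) ≤ ((n : ℝ) - α) / (n + 1) := by
          apply div_nonneg
          · have : (2:ℝ) ≤ (n:ℝ) := by exact_mod_cast hn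
            linarith
          · positivity
        exact mul_nonneg (ih hn) hr
  have hmono : ∀ j : ℕ, 2 ≤ j → glWeight α (j + 1) ≤ glWeight α j := by
    intro j hj
    rw [glWeight_succ]
    have hw := hnn j hj
    have hr1 : ((j : ℝ) - α) / (j + 1) ≤ 1 := by
      rw [div_le_one (by positivity)]
      linarith [hα1]
    have hr0 : (0:ℝ) ≤ ((j : ℝ) - α) / (j + 1) := by
      apply div_nonneg
      · have : (2:ℝ) ≤ (j:ℝ) := by exact_mod_cast hj
        linarith
      · positivity
    calc glWeight α j * (((j : ℝ) - α) / (j + 1)) ≤ glWeight α j * 1 := by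
          exact mul_le_mul_of_nonneg_left hr1 hw
      _ = glWeight α j := by ring
  have hle : ∀ j : ℕ, 2 ≤ j → glWeight α j ≤ 1 := by
    intro j hj
    induction j with
    | zero => omega
    | succ n ih =>
      rcases Nat.lt_or_ge n 2 with hn | hn
      · interval_cases n
        · omega
        · rw [show (1:ℕ)+1 = 2 from rfl, glWeight_two]
          nlinarith
      · exact le_trans (hmono n hn) (ih hn)
  exact ⟨h0, h1, by rw [h1]; linarith, hle, hnn, hmono⟩
end

section
/- For a real number α with 1 < α < 2 and the Grünwald–Letnikov weights ω_j^{(α)} = (-1)^j C(α,j), every partial sum satisfies ∑_{k=0}^{m} ω_k^{(α)} ≤ 0 for all integers m ≥ 1, and the full series satisfies ∑_{k=0}^{∞} ω_k^{(α)} = 0. -/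
/-- `(-1)^m C(α-1, m)`, the closed form of the partial sums. -/
noncomputable def glPS (α : ℝ) (m : ℕ) : ℝ :=
  (-1) ^ m * ((∏ i ∈ Finset.range m, (α - 1 - i)) / (Nat.factorial m))

lemma glPS_one (α : ℝ) : glPS α 1 = -(α - 1) := by
  unfold glPS; simp [Nat.factorial]

lemma glPS_sum (α : ℝ) (m : ℕ) :
    ∑ k ∈ Finset.range (m + 1), glWeight α k = glPS α m := by
  induction m with
  | zero => simp [glWeight, glPS]
  | succ m ih =>
    rw [Finset.sum_range_succ, ih]
    unfold glWeight glPS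
    have h1 : ∏ i ∈ Finset.range (m + 1), (α - (i : ℕ)) =
        (∏ i ∈ Finset.range m, (α - 1 - i)) * α := by
      rw [Finset.prod_range_succ',
        Finset.prod_congr rfl (fun i _ => show (α - ((i + 1 : ℕ) : ℝ)) = α - 1 - i by
          push_cast; ring)]
      norm_num
    have h2 : ∏ i ∈ Finset.range (m + 1), (α - 1 - (i : ℕ)) =
        (∏ i ∈ Finset.range m, (α - 1 - i)) * (α - 1 - m) := by
      rw [Finset.prod_range_succ]
    rw [h1, h2, Nat.factorial_succ]
    have hm : (Nat.factorial m : ℝ) ≠ 0 := by positivity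
    have hm1 : ((m : ℝ) + 1) ≠ 0 := by positivity
    push_cast
    field_simp
    ring

lemma glPS_succ (α : ℝ) (m : ℕ) :
    glPS α (m + 1) = glPS α m * (((m : ℝ) + 1 - α) / ((m : ℝ) + 1)) := by
  unfold glPS
  rw [Finset.prod_range_succ, Nat.factorial_succ]
  have hm : (Nat.factorial m : ℝ) ≠ 0 := by positivity
  have hm1 : ((m : ℝ) + 1) ≠ 0 := by positivity
  push_cast
  field_simp
  ring

lemma glPS_bound (α : ℝ) (hα1 : 1 < α) (hα2 : α < 2) :
    ∀ m : ℕ, 1 ≤ m → glPS α m ≤ 0 ∧ -(1 / (m : ℝ)) ≤ glPS α m := by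
  intro m hm
  induction m, hm using Nat.le_induction with
  | base =>
    rw [glPS_one]
    norm_num
    constructor <;> nlinarith
  | succ m hm ih =>
    obtain ⟨h1, h2⟩ := ih
    rw [glPS_succ]
    have hmr : (1 : ℝ) ≤ (m : ℝ) := by exact_mod_cast hm
    have hc0 : 0 ≤ ((m : ℝ) + 1 - α) / ((m : ℝ) + 1) := by
      apply div_nonneg <;> nlinarith
    refine ⟨mul_nonpos_of_nonpos_of_nonneg h1 hc0, ?_⟩
    have key : -(1 / (m : ℝ)) * (((m : ℝ) + 1 - α) / ((m : ℝ) + 1)) ≤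
        glPS α m * (((m : ℝ) + 1 - α) / ((m : ℝ) + 1)) :=
      mul_le_mul_of_nonneg_right h2 hc0
    have e : -(1 / (m : ℝ)) * (((m : ℝ) + 1 - α) / ((m : ℝ) + 1)) =
        -(((m : ℝ) + 1 - α) / ((m : ℝ) * ((m : ℝ) + 1))) := by
      have hm0 : (m : ℝ) ≠ 0 := by linarith
      have hm1 : ((m : ℝ) + 1) ≠ 0 := by linarith
      field_simp
    have hle : ((m : ℝ) + 1 - α) / ((m : ℝ) * ((m : ℝ) + 1)) ≤ 1 / ((m : ℝ) + 1) := by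
      rw [div_le_div_iff₀ (by nlinarith) (by nlinarith)]
      nlinarith
    push_cast
    calc -(1 / ((m : ℝ) + 1)) ≤ -(((m : ℝ) + 1 - α) / ((m : ℝ) * ((m : ℝ) + 1))) := by
          linarith
      _ = -(1 / (m : ℝ)) * (((m : ℝ) + 1 - α) / ((m : ℝ) + 1)) := e.symm
      _ ≤ _ := key

lemma glWeight_nonneg (α : ℝ) (hα1 : 1 < α) (hα2 : α < 2) (k : ℕ) :
    0 ≤ glWeight α (k + 2) := by
  have key : ∀ n : ℕ, 0 ≤ (-1 : ℝ) ^ n * ∏ i ∈ Finset.range n, (α - 2 - i) := by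
    intro n
    induction n with
    | zero => simp
    | succ n ih =>
      rw [Finset.prod_range_succ, pow_succ]
      have hn : (0 : ℝ) ≤ (n : ℝ) + 2 - α := by
        have : (0 : ℝ) ≤ (n : ℝ) := Nat.cast_nonneg n
        linarith
      calc (0:ℝ) ≤ ((-1) ^ n * ∏ i ∈ Finset.range n, (α - 2 - i)) * ((n : ℝ) + 2 - α) :=
            mul_nonneg ih hn
        _ = (-1) ^ n * -1 * ((∏ i ∈ Finset.range n, (α - 2 - i)) * (α - 2 - n)) := by ring
  have hprod : ∏ i ∈ Finset.range (k + 2), (α - (i : ℕ)) =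
      (∏ i ∈ Finset.range k, (α - 2 - i)) * (α - 1) * α := by
    rw [Finset.prod_range_succ', Finset.prod_range_succ',
      Finset.prod_congr rfl (fun i _ => show (α - ((i + 1 + 1 : ℕ) : ℝ)) = α - 2 - i by
        push_cast; ring)]
    norm_num
  unfold glWeight
  rw [hprod]
  have hpow : ((-1 : ℝ)) ^ (k + 2) = (-1 : ℝ) ^ k := by
    rw [pow_add]; norm_num
  rw [hpow]
  have heq : (-1:ℝ)^k * ((∏ i ∈ Finset.range k, (α-2-i)) * (α-1) * α / (Nat.factorial (k+2))) =
      ((-1:ℝ)^k * ∏ i ∈ Finset.range k, (α-2-i)) * ((α-1) * α / (Nat.factorial (k+2))) := by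
    ring
  rw [heq]
  have hα1' : (0:ℝ) < α - 1 := by linarith
  have hα0 : (0:ℝ) < α := by linarith
  exact mul_nonneg (key k) (by positivity)

/-- For `1 < α < 2`, every partial sum `∑_{k=0}^m ω_k^{(α)}` with
`m ≥ 1` is `≤ 0`, and the full series sums to `0`. -/
theorem glWeight_sums (α : ℝ) (hα1 : 1 < α) (hα2 : α < 2) :
    (∀ m : ℕ, 1 ≤ m → ∑ k ∈ Finset.range (m + 1), glWeight α k ≤ 0) ∧
    HasSum (glWeight α) 0 := by
  constructor
  · intro m hm
    rw [glPS_sum]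
    exact (glPS_bound α hα1 hα2 m hm).1
  · have hsum2 : Summable (fun k => glWeight α (k + 2)) := by
      apply summable_of_sum_range_le (c := α - 1)
        (fun k => glWeight_nonneg α hα1 hα2 k)
      intro n
      have hsplit : glPS α (n + 1) = glPS α 1 + ∑ i ∈ Finset.range n, glWeight α (i + 2) := by
        rw [← glPS_sum, ← glPS_sum]
        have e : n + 1 + 1 = 2 + n := by omega
        rw [e, Finset.sum_range_add]
        congr 1
        exact Finset.sum_congr rfl (fun i _ => by rw [add_comm])
      have h1 : glPS α (n + 1) ≤ 0 := (glPS_bound α hα1 hα2 (n + 1) (by omega)).1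
      rw [glPS_one] at hsplit
      linarith
    have hsum : Summable (glWeight α) := (summable_nat_add_iff 2).mp hsum2
    rw [hsum.hasSum_iff_tendsto_nat]
    have h1 : Filter.Tendsto (fun m : ℕ => glPS α m) Filter.atTop (nhds 0) := by
      have hlo : Filter.Tendsto (fun m : ℕ => -(1 / (m : ℝ))) Filter.atTop (nhds 0) := by
        simpa using (tendsto_one_div_atTop_nhds_zero_nat (𝕜 := ℝ)).neg
      apply tendsto_of_tendsto_of_tendsto_of_le_of_le' hlo tendsto_const_nhds
      · filter_upwards [Filter.eventually_ge_atTop 1] with m hm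
        exact (glPS_bound α hα1 hα2 m hm).2
      · filter_upwards [Filter.eventually_ge_atTop 1] with m hm
        exact (glPS_bound α hα1 hα2 m hm).1
    have h2 : Filter.Tendsto (fun n : ℕ => ∑ k ∈ Finset.range (n + 1), glWeight α k)
        Filter.atTop (nhds 0) := by
      simpa only [glPS_sum] using h1
    exact (Filter.tendsto_add_atTop_iff_nat 1).mp h2
end
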